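/- Let D be the 2^{2n} × (2n+2) design generated from G = (v, I_n), and let D′ be the half-fraction obtained by branching on a column associated with an entry 2 of v. Then D′ has exactly one complete word of length k_2 and exactly 2/ρ² partial words of length k_1 − 1 with aliasing index ρ, where k_1 = f_1 + 2f_2 + f_3 + 1, k_2 = 2f_1 + 2f_3 + 2, ρ = 2^{−⌊(f_1+f_3)/2⌋}. -/

import Mathlib

open Finset

/-- The Gray map `φ : Z₄ → {−1,1}²`: φ(0)=(1,1), φ(1)=(1,−1), φ(2)=(−1,−1), φ(3)=(−1,1). -/
def gray (x : ZMod 4) : Fin 2 → ℤ := fun c =>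
  if c = 0 then (if x = 0 ∨ x = 1 then 1 else -1)
  else (if x = 0 ∨ x = 3 then 1 else -1)

/-- The `2^{2n} × (2n+2)` two-level design which is the Gray-map image of the quaternary
code generated by `G = (v, Iₙ)`.  Rows are indexed by `u : Fin n → ZMod 4`; the codeword is
`(∑ uᵢvᵢ, u₁, …, uₙ)` and each `Z₄`-coordinate gives two ±1 columns via the Gray map. -/
def Dv {n : ℕ} (v : Fin n → ZMod 4) :
    (Fin n → ZMod 4) → (Fin (n + 1) × Fin 2) → ℤ :=
  fun u p => gray ((Fin.cons (∑ i, u i * v i) u : Fin (n + 1) → ZMod 4) p.1) p.2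

/-- The J-characteristic `j(s; D) = ∑ᵢ ∏_{c ∈ s} D i c`. -/
def Jchar {I J : Type*} [Fintype I] (D : I → J → ℤ) (s : Finset J) : ℤ :=
  ∑ i, ∏ c ∈ s, D i c

/-- The aliasing index `ρ(s; D) = |j(s; D)| / N`. -/
def rho {I J : Type*} [Fintype I] (D : I → J → ℤ) (s : Finset J) : ℚ :=
  |(Jchar D s : ℚ)| / (Fintype.card I : ℚ)

/-- `freq v z` = number of occurrences of `z ∈ Z₄` in the vector `v`. -/
def freq {n : ℕ} (v : Fin n → ZMod 4) (z : ZMod 4) : ℕ :=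
  (Finset.univ.filter fun i => v i = z).card

/-- A design has projectivity (at least) `p` if every projection onto `p` columns contains a
complete `2^p` factorial. -/
def hasProjectivity {I J : Type*} (D : I → J → ℤ) (p : ℕ) : Prop :=
  ∀ s : Finset J, s.card = p → ∀ ε : J → ℤ, (∀ c, ε c = 1 ∨ ε c = -1) →
    ∃ i, ∀ c ∈ s, D i c = ε c

/-- `hasResolution D R` : the generalized resolution of `D` equals `R`, i.e.
`R = r + 1 − max_{|s| = r} ρ(s; D)` where `r` is the smallest size of a (nonempty) column
subset with positive aliasing index. -/
def hasResolution {I J : Type*} [Fintype I] (D : I → J → ℤ) (R : ℚ) : Prop :=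
  ∃ (r : ℕ) (m : ℚ),
    (∃ s : Finset J, s.card = r ∧ 0 < rho D s) ∧
    (∀ s : Finset J, s.Nonempty → s.card < r → rho D s = 0) ∧
    (∃ s : Finset J, s.card = r ∧ rho D s = m) ∧
    (∀ s : Finset J, s.card = r → rho D s ≤ m) ∧
    R = (r : ℚ) + 1 - m

/-- The generalized wordlength pattern `A_k(D) = ∑_{|s| = k} ρ(s; D)²`. -/
def Apattern {I J : Type*} [Fintype I] [Fintype J] (D : I → J → ℤ) (k : ℕ) : ℚ :=
  ∑ s ∈ Finset.powersetCard k Finset.univ, (rho D s) ^ 2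

/-- The half-fraction of `D` obtained by keeping the rows where the branching column `b`
equals `+1` and deleting column `b`. -/
def halfFraction {I J : Type*} (D : I → J → ℤ) (b : J) :
    {i : I // D i b = 1} → {c : J // c ≠ b} → ℤ :=
  fun i c => D i.1 c.1

/-- Sequential (lexicographic) comparison of generalized wordlength patterns:
`D` has no more aberration than `D'`. -/
def wlpLe {I I' J : Type*} [Fintype I] [Fintype I'] [Fintype J]
    (D : I → J → ℤ) (D' : I' → J → ℤ) : Prop :=
  ∀ k : ℕ, (∀ j < k, Apattern D j = Apattern D' j) → Apattern D k ≤ Apattern D' k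


namespace St10
abbrev R := GaussianInt
def gi : R := ⟨0,1⟩
def chi (x : ZMod 4) : R := gi ^ x.val

lemma chi_add : ∀ x y : ZMod 4, chi (x+y) = chi x * chi y := by decide
lemma chi_zero : chi 0 = 1 := by decide
lemma chi_orth : ∀ z : ZMod 4, (∑ t : ZMod 4, chi (t*z)) = if z = 0 then 4 else 0 := by decide

lemma chi_sum {α : Type*} (t : Finset α) (f : α → ZMod 4) :
    chi (∑ j ∈ t, f j) = ∏ j ∈ t, chi (f j) := by
  classical
  induction t using Finset.induction with
  | empty => simp [chi_zero]
  | insert _ _ h ih => rw [Finset.sum_insert h, Finset.prod_insert h, chi_add, ih]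

lemma zmod4_sum {M : Type*} [AddCommMonoid M] (F : ZMod 4 → M) :
    ∑ t : ZMod 4, F t = F 0 + F 1 + F 2 + F 3 := by
  have h : (univ : Finset (ZMod 4)) = {0, 1, 2, 3} := by decide
  rw [h, Finset.sum_insert (by decide), Finset.sum_insert (by decide),
    Finset.sum_insert (by decide), Finset.sum_singleton, add_assoc, add_assoc]

lemma master {n : ℕ} (v : Fin n → ZMod 4) (f0 : ZMod 4 → R) (g : Fin n → ZMod 4 → R) :
    (4 : R) * ∑ u : Fin n → ZMod 4, f0 (∑ j, u j * v j) * ∏ j, g j (u j)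
      = ∑ t : ZMod 4, (∑ w, f0 w * chi (t * w)) *
          ∏ j, (∑ x, g j x * chi (-(t * (v j * x)))) := by
  have step1 : ∀ t : ZMod 4,
      (∏ j, (∑ x : ZMod 4, g j x * chi (-(t * (v j * x)))))
        = ∑ u : Fin n → ZMod 4, (∏ j, g j (u j)) * chi (-(t * ∑ j, u j * v j)) := by
    intro t
    rw [Finset.prod_univ_sum, Fintype.piFinset_univ]
    refine Finset.sum_congr rfl fun u _ => ?_
    rw [Finset.prod_mul_distrib, ← chi_sum]
    congr 2
    rw [Finset.mul_sum, ← Finset.sum_neg_distrib]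
    exact Finset.sum_congr rfl fun j _ => by ring_nf
  symm
  calc ∑ t : ZMod 4, (∑ w, f0 w * chi (t * w)) *
          ∏ j, (∑ x, g j x * chi (-(t * (v j * x))))
      = ∑ t : ZMod 4, ∑ w : ZMod 4, ∑ u : Fin n → ZMod 4,
          (f0 w * ∏ j, g j (u j)) * chi (t * (w - ∑ j, u j * v j)) := by
        refine Finset.sum_congr rfl fun t _ => ?_
        rw [step1, Finset.sum_mul_sum]
        refine Finset.sum_congr rfl fun w _ => Finset.sum_congr rfl fun u _ => ?_
        have : chi (t * (w - ∑ j, u j * v j))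
            = chi (t * w) * chi (-(t * ∑ j, u j * v j)) := by
          rw [← chi_add]; congr 1; ring
        rw [this]; ring
    _ = ∑ t : ZMod 4, ∑ u : Fin n → ZMod 4, ∑ w : ZMod 4,
          (f0 w * ∏ j, g j (u j)) * chi (t * (w - ∑ j, u j * v j)) := by
        exact Finset.sum_congr rfl fun t _ => Finset.sum_comm
    _ = ∑ u : Fin n → ZMod 4, ∑ t : ZMod 4, ∑ w : ZMod 4,
          (f0 w * ∏ j, g j (u j)) * chi (t * (w - ∑ j, u j * v j)) := by
        exact Finset.sum_comm
    _ = ∑ u : Fin n → ZMod 4, ∑ w : ZMod 4,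
          (f0 w * ∏ j, g j (u j)) * ∑ t : ZMod 4, chi (t * (w - ∑ j, u j * v j)) := by
        refine Finset.sum_congr rfl fun u _ => ?_
        rw [Finset.sum_comm]
        exact Finset.sum_congr rfl fun w _ => (Finset.mul_sum ..).symm
    _ = ∑ u : Fin n → ZMod 4, (4:R) * (f0 (∑ j, u j * v j) * ∏ j, g j (u j)) := by
        refine Finset.sum_congr rfl fun u _ => ?_
        have horth : ∀ w : ZMod 4, (∑ t : ZMod 4, chi (t * (w - ∑ j, u j * v j)))
            = if w = ∑ j, u j * v j then 4 else 0 := by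
          intro w; rw [chi_orth]; simp [sub_eq_zero]
        simp only [horth, mul_ite, mul_zero]
        rw [Finset.sum_ite_eq' univ (∑ j, u j * v j)
          (fun w => (f0 w * ∏ j, g j (u j)) * 4)]
        simp; ring
    _ = (4 : R) * ∑ u : Fin n → ZMod 4, f0 (∑ j, u j * v j) * ∏ j, g j (u j) := by
        rw [Finset.mul_sum]


def grC (bb : Bool × Bool) (x : ZMod 4) : R :=
  (((if bb.1 then gray x 0 else 1) * (if bb.2 then gray x 1 else 1) : ℤ) : R)

def Sfun (bb : Bool × Bool) (s : ZMod 4) : R := ∑ x : ZMod 4, grC bb x * chi (s * x)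

def pats {n : ℕ} (s : Finset (Fin (n+1) × Fin 2)) (j : Fin (n+1)) : Bool × Bool :=
  (decide ((j, 0) ∈ s), decide ((j, 1) ∈ s))

def Jt {n : ℕ} (v : Fin n → ZMod 4) (τ : Fin (n+1) → Bool × Bool) (t : ZMod 4) : R :=
  Sfun (τ 0) t * ∏ j, Sfun (τ j.succ) ((-t) * v j)

lemma fourJ {n : ℕ} (v : Fin n → ZMod 4) (s : Finset (Fin (n+1) × Fin 2)) :
    (4 : R) * ((Jchar (Dv v) s : ℤ) : R) = ∑ t : ZMod 4, Jt v (pats s) t := by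
  have hrow : ∀ u : Fin n → ZMod 4,
      ((∏ p ∈ s, Dv v u p : ℤ) : R)
        = grC (pats s 0) (∑ j, u j * v j) * ∏ j, grC (pats s j.succ) (u j) := by
    intro u
    have h1 : (∏ p ∈ s, Dv v u p)
        = ∏ p : Fin (n+1) × Fin 2, (if p ∈ s then Dv v u p else 1) := by
      rw [Finset.prod_ite_mem, Finset.univ_inter]
    have h2 : (∏ p : Fin (n+1) × Fin 2, (if p ∈ s then Dv v u p else 1))
        = ∏ j : Fin (n+1), ∏ c : Fin 2, (if (j, c) ∈ s then Dv v u (j, c) else 1) :=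
      Fintype.prod_prod_type _
    have h3 : ∀ j : Fin (n+1),
        (∏ c : Fin 2, (if (j, c) ∈ s then Dv v u (j, c) else 1) : ℤ)
          = (if (pats s j).1 then gray ((Fin.cons (∑ i, u i * v i) u : Fin (n+1) → ZMod 4) j) 0 else 1)
            * (if (pats s j).2 then gray ((Fin.cons (∑ i, u i * v i) u : Fin (n+1) → ZMod 4) j) 1 else 1) := by
      intro j
      rw [Fin.prod_univ_two]
      simp only [pats, Dv, decide_eq_true_eq]
    have h4 : (∏ p ∈ s, Dv v u p)
        = ∏ j : Fin (n+1),
            ((if (pats s j).1 then gray ((Fin.cons (∑ i, u i * v i) u : Fin (n+1) → ZMod 4) j) 0 else 1)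
            * (if (pats s j).2 then gray ((Fin.cons (∑ i, u i * v i) u : Fin (n+1) → ZMod 4) j) 1 else 1)) := by
      rw [h1, h2]; exact Finset.prod_congr rfl fun j _ => h3 j
    rw [h4]
    push_cast
    have h5 : ∀ j : Fin (n+1),
        (((if (pats s j).1 then (gray ((Fin.cons (∑ i, u i * v i) u : Fin (n+1) → ZMod 4) j) 0 : R) else 1))
          * ((if (pats s j).2 then (gray ((Fin.cons (∑ i, u i * v i) u : Fin (n+1) → ZMod 4) j) 1 : R) else 1)))
          = grC (pats s j) ((Fin.cons (∑ i, u i * v i) u : Fin (n+1) → ZMod 4) j) := by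
      intro j; unfold grC; push_cast; rfl
    calc (∏ j : Fin (n+1),
            (((if (pats s j).1 then (gray ((Fin.cons (∑ i, u i * v i) u : Fin (n+1) → ZMod 4) j) 0 : R) else 1))
            * ((if (pats s j).2 then (gray ((Fin.cons (∑ i, u i * v i) u : Fin (n+1) → ZMod 4) j) 1 : R) else 1))))
        = ∏ j : Fin (n+1), grC (pats s j) ((Fin.cons (∑ i, u i * v i) u : Fin (n+1) → ZMod 4) j) :=
          Finset.prod_congr rfl fun j _ => h5 j
      _ = grC (pats s 0) (∑ j, u j * v j) * ∏ j, grC (pats s j.succ) (u j) := by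
          rw [Fin.prod_univ_succ]
          simp [Fin.cons_zero, Fin.cons_succ]
  have hJ : ((Jchar (Dv v) s : ℤ) : R)
      = ∑ u : Fin n → ZMod 4, grC (pats s 0) (∑ j, u j * v j) * ∏ j, grC (pats s j.succ) (u j) := by
    unfold Jchar
    push_cast
    exact Finset.sum_congr rfl fun u _ => by
      have := hrow u; push_cast at this; exact this
  rw [hJ, master]
  refine Finset.sum_congr rfl fun t _ => ?_
  unfold Jt Sfun
  congr 1
  refine Finset.prod_congr rfl fun j _ => Finset.sum_congr rfl fun x _ => ?_
  congr 2
  ring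

def pick (c : Fin 2) : Bool × Bool := if c = 0 then (true,false) else (false,true)
def reqW (a : ZMod 4) : Bool × Bool := if a = 1 ∨ a = 3 then (true,true) else (false,false)
def d4 (a : ZMod 4) (c : Fin 2) : ℕ := if (a = 1 ∧ c = 1) ∨ (a = 3 ∧ c = 0) then 1 else 0

lemma S_ff0 : ∀ bb, bb ≠ (false,false) → Sfun bb 0 = 0 := by decide
lemma S_t2_zero : ∀ bb (a : ZMod 4), bb ≠ reqW a → Sfun bb ((-2)*a) = 0 := by decide
lemma S_t2_reqW : ∀ a : ZMod 4, Sfun (reqW a) ((-2)*a) = 4 := by decide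
lemma S_tt2 : Sfun (true,true) 2 = 4 := by decide
lemma S_head_odd_zero : ∀ bb (t : ZMod 4), (t = 1 ∨ t = 3) → (∀ c, bb ≠ pick c) →
    Sfun bb t = 0 := by decide
lemma S_odd_zero : ∀ bb (a t : ZMod 4), (t = 1 ∨ t = 3) →
    ¬(if a = 2 then bb = (true,true) else
      if a = 1 ∨ a = 3 then (bb = pick 0 ∨ bb = pick 1) else bb = (false,false)) →
    Sfun bb ((-t)*a) = 0 := by decide
lemma S_1_odd : ∀ (a : ZMod 4) (c : Fin 2), (a = 1 ∨ a = 3) →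
    Sfun (pick c) ((-1)*a) = 2*(1-gi)*gi^(d4 a c) := by decide
lemma S_3_odd : ∀ (a : ZMod 4) (c : Fin 2), (a = 1 ∨ a = 3) →
    Sfun (pick c) ((-3)*a) = 2*(1+gi)*(-gi)^(d4 a c) := by decide
lemma S_odd_even4 : ∀ (a t : ZMod 4), ¬(a = 1 ∨ a = 3) → (t = 1 ∨ t = 3) →
    Sfun (if a = 2 then (true,true) else (false,false)) ((-t)*a) = 4 := by decide

def T (m a : ℕ) : R := (1-gi)^m * gi^a + (1+gi)^m * (-gi)^a

lemma T_period (m a : ℕ) : T m (a+4) = T m a := by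
  have h1 : gi^(4:ℕ) = 1 := by decide
  have h2 : (-gi)^(4:ℕ) = 1 := by decide
  unfold T; rw [pow_add, pow_add, h1, h2]; ring

lemma T_mod (m a : ℕ) : T m a = T m (a % 4) := by
  conv_lhs => rw [← Nat.mod_add_div a 4]
  generalize a / 4 = k
  induction k with
  | zero => rfl
  | succ k ih => rw [show a % 4 + 4*(k+1) = (a % 4 + 4*k) + 4 from by ring, T_period, ih]

lemma T_step (m a : ℕ) : T (m+2) (a+1) = 2 * T m a := by
  have h1 : (1-gi)^(2:ℕ) * gi = 2 := by decide
  have h2 : (1+gi)^(2:ℕ) * (-gi) = 2 := by decide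
  calc T (m+2) (a+1)
      = (1-gi)^m * gi^a * ((1-gi)^(2:ℕ)*gi) + (1+gi)^m * (-gi)^a * ((1+gi)^(2:ℕ)*(-gi)) := by
        unfold T; ring
    _ = 2 * T m a := by rw [h1, h2]; unfold T; ring

lemma T_zero_ext (m : ℕ) : T (m+2) 0 = 2 * T m 3 := by
  have : T (m+2) 0 = T (m+2) 4 := by rw [T_mod (m+2) 4]
  rw [this, show (4:ℕ) = 3+1 from rfl, T_step]

lemma T_odd : ∀ q a : ℕ, ∃ e : ℤ, (e = 1 ∨ e = -1) ∧ T (2*q+1) a = (e:R) * 2^(q+1) := by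
  intro q
  induction q with
  | zero =>
    intro a
    rw [T_mod]
    have h4 : a % 4 < 4 := Nat.mod_lt _ (by norm_num)
    interval_cases h : a % 4
    · exact ⟨1, Or.inl rfl, by decide⟩
    · exact ⟨1, Or.inl rfl, by decide⟩
    · exact ⟨-1, Or.inr rfl, by decide⟩
    · exact ⟨-1, Or.inr rfl, by decide⟩
  | succ q ih =>
    intro a
    have hm : 2*(q+1)+1 = (2*q+1)+2 := by ring
    match a with
    | 0 =>
      obtain ⟨e, he, hT⟩ := ih 3
      exact ⟨e, he, by rw [hm, T_zero_ext, hT]; push_cast; ring⟩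
    | Nat.succ a =>
      obtain ⟨e, he, hT⟩ := ih a
      exact ⟨e, he, by rw [hm, T_step, hT]; push_cast; ring⟩

lemma T_even : ∀ q a : ℕ, (a % 2 ≠ (q+1) % 2 → T (2*q+2) a = 0) ∧
    (a % 2 = (q+1) % 2 → ∃ e : ℤ, (e = 1 ∨ e = -1) ∧ T (2*q+2) a = (e:R) * 2^(q+2)) := by
  intro q
  induction q with
  | zero =>
    intro a
    have hmod : a % 2 = (a % 4) % 2 := (Nat.mod_mod_of_dvd a (by norm_num)).symm
    rw [T_mod, hmod]
    have h4 : a % 4 < 4 := Nat.mod_lt _ (by norm_num)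
    interval_cases h : a % 4
    · exact ⟨fun _ => by decide, fun h => by omega⟩
    · exact ⟨fun h => by omega, fun _ => ⟨1, Or.inl rfl, by decide⟩⟩
    · exact ⟨fun _ => by decide, fun h => by omega⟩
    · exact ⟨fun h => by omega, fun _ => ⟨-1, Or.inr rfl, by decide⟩⟩
  | succ q ih =>
    intro a
    have hm : 2*(q+1)+2 = (2*q+2)+2 := by ring
    match a with
    | 0 =>
      refine ⟨fun h => ?_, fun h => ?_⟩
      · rw [hm, T_zero_ext, (ih 3).1 (by omega), mul_zero]
      · obtain ⟨e, he, hT⟩ := (ih 3).2 (by omega)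
        exact ⟨e, he, by rw [hm, T_zero_ext, hT]; push_cast; ring⟩
    | Nat.succ a =>
      refine ⟨fun h => ?_, fun h => ?_⟩
      · rw [hm, T_step, (ih a).1 (by omega), mul_zero]
      · obtain ⟨e, he, hT⟩ := (ih a).2 (by omega)
        exact ⟨e, he, by rw [hm, T_step, hT]; push_cast; ring⟩



section Words
variable {n : ℕ} (v : Fin n → ZMod 4)

def tauW : Fin (n+1) → Bool × Bool := Fin.cons (true,true) (fun j => reqW (v j))

def tauP (ε : Fin (n+1) → Fin 2) : Fin (n+1) → Bool × Bool :=
  Fin.cons (pick (ε 0)) (fun j => if v j = 2 then (true,true)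
    else if v j = 1 ∨ v j = 3 then pick (ε j.succ) else (false,false))

def Odds : Finset (Fin n) := univ.filter (fun j => v j = 1 ∨ v j = 3)

def E0 : ℕ := (univ.filter (fun j => ¬(v j = 1 ∨ v j = 3))).card

def aOf (ε : Fin (n+1) → Fin 2) : ℕ := d4 3 (ε 0) + ∑ j ∈ Odds v, d4 (v j) (ε j.succ)

lemma Jt_zero_head (τ : Fin (n+1) → Bool × Bool) (t : ZMod 4) (h : Sfun (τ 0) t = 0) :
    Jt v τ t = 0 := by unfold Jt; rw [h, zero_mul]

lemma Jt_zero_at (τ : Fin (n+1) → Bool × Bool) (t : ZMod 4) (j : Fin n)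
    (h : Sfun (τ j.succ) ((-t) * v j) = 0) : Jt v τ t = 0 := by
  unfold Jt; rw [Finset.prod_eq_zero (mem_univ j) h, mul_zero]

lemma tauW_zero : tauW v 0 = (true, true) := Fin.cons_zero _ _
lemma tauW_succ (j : Fin n) : tauW v j.succ = reqW (v j) := Fin.cons_succ _ _ _
lemma tauP_zero (ε : Fin (n+1) → Fin 2) : tauP v ε 0 = pick (ε 0) := Fin.cons_zero _ _
lemma tauP_succ (ε : Fin (n+1) → Fin 2) (j : Fin n) :
    tauP v ε j.succ = if v j = 2 then (true,true)
      else if v j = 1 ∨ v j = 3 then pick (ε j.succ) else (false,false) := Fin.cons_succ _ _ _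

lemma tauP_succ_odd (ε : Fin (n+1) → Fin 2) (j : Fin n) (h : v j = 1 ∨ v j = 3) :
    tauP v ε j.succ = pick (ε j.succ) := by
  rw [tauP_succ]
  rcases h with h | h <;> rw [h]
  · rw [if_neg (by decide), if_pos (by decide)]
  · rw [if_neg (by decide), if_pos (by decide)]

lemma tauP_succ_even (ε : Fin (n+1) → Fin 2) (j : Fin n) (h : ¬(v j = 1 ∨ v j = 3)) :
    tauP v ε j.succ = if v j = 2 then (true,true) else (false,false) := by
  rw [tauP_succ]
  by_cases h2 : v j = 2
  · rw [if_pos h2, if_pos h2]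
  · rw [if_neg h2, if_neg h, if_neg h2]

lemma Jt_tauW_two : Jt v (tauW v) 2 = 4^(n+1) := by
  unfold Jt
  rw [tauW_zero, S_tt2,
    Finset.prod_congr rfl (fun j ( _ : j ∈ univ) => by
      rw [tauW_succ] : ∀ j ∈ univ, Sfun (tauW v j.succ) ((-2) * v j) = Sfun (reqW (v j)) ((-2) * v j)),
    Finset.prod_congr rfl (fun j _ => S_t2_reqW (v j)), Finset.prod_const, card_univ]
  simp [pow_succ]; ring

lemma mem_Odds {j : Fin n} : j ∈ Odds v ↔ (v j = 1 ∨ v j = 3) := by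
  unfold Odds; simp

lemma Jt_tauP_value (ε : Fin (n+1) → Fin 2) :
    Jt v (tauP v ε) 1 + Jt v (tauP v ε) 3
      = 4^(E0 v) * 2^((Odds v).card + 1) * T ((Odds v).card + 1) (aOf v ε) := by
  have hsplit : ∀ t : ZMod 4, (t = 1 ∨ t = 3) →
      (∏ j, Sfun (tauP v ε j.succ) ((-t) * v j))
        = (∏ j ∈ Odds v, Sfun (pick (ε j.succ)) ((-t) * v j)) * 4^(E0 v) := by
    intro t ht
    rw [← Finset.prod_filter_mul_prod_filter_not univ (fun j => v j = 1 ∨ v j = 3)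
      (fun j => Sfun (tauP v ε j.succ) ((-t) * v j))]
    congr 1
    · refine Finset.prod_congr rfl fun j hj => ?_
      rw [tauP_succ_odd v ε j (mem_filter.1 hj).2]
    · have h1 : (∏ j ∈ univ.filter (fun j => ¬(v j = 1 ∨ v j = 3)),
          Sfun (tauP v ε j.succ) ((-t) * v j)) = ∏ _j ∈ univ.filter (fun j => ¬(v j = 1 ∨ v j = 3)), (4:R) := by
        refine Finset.prod_congr rfl fun j hj => ?_
        rw [tauP_succ_even v ε j (mem_filter.1 hj).2]
        exact S_odd_even4 (v j) t (mem_filter.1 hj).2 ht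
      rw [h1, Finset.prod_const]
      rfl
  have hodd1 : (∏ j ∈ Odds v, Sfun (pick (ε j.succ)) ((-1) * v j))
      = (2*(1-gi))^((Odds v).card) * gi^(∑ j ∈ Odds v, d4 (v j) (ε j.succ)) := by
    have h1 : (∏ j ∈ Odds v, Sfun (pick (ε j.succ)) ((-1) * v j))
        = ∏ j ∈ Odds v, (2*(1-gi)) * gi^(d4 (v j) (ε j.succ)) := by
      refine Finset.prod_congr rfl fun j hj => ?_
      exact S_1_odd (v j) (ε j.succ) ((mem_Odds v).1 hj)
    rw [h1, Finset.prod_mul_distrib, Finset.prod_const, Finset.prod_pow_eq_pow_sum]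
  have hodd3 : (∏ j ∈ Odds v, Sfun (pick (ε j.succ)) ((-3) * v j))
      = (2*(1+gi))^((Odds v).card) * (-gi)^(∑ j ∈ Odds v, d4 (v j) (ε j.succ)) := by
    have h1 : (∏ j ∈ Odds v, Sfun (pick (ε j.succ)) ((-3) * v j))
        = ∏ j ∈ Odds v, (2*(1+gi)) * (-gi)^(d4 (v j) (ε j.succ)) := by
      refine Finset.prod_congr rfl fun j hj => ?_
      exact S_3_odd (v j) (ε j.succ) ((mem_Odds v).1 hj)
    rw [h1, Finset.prod_mul_distrib, Finset.prod_const, Finset.prod_pow_eq_pow_sum]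
  have hhead1 : Sfun (pick (ε 0)) 1 = 2*(1-gi)*gi^(d4 3 (ε 0)) := by
    have h := S_1_odd 3 (ε 0) (Or.inr rfl)
    rwa [show ((-1) * 3 : ZMod 4) = 1 from by decide] at h
  have hhead3 : Sfun (pick (ε 0)) 3 = 2*(1+gi)*(-gi)^(d4 3 (ε 0)) := by
    have h := S_3_odd 3 (ε 0) (Or.inr rfl)
    rwa [show ((-3) * 3 : ZMod 4) = 3 from by decide] at h
  unfold Jt
  rw [tauP_zero, hsplit 1 (Or.inl rfl), hsplit 3 (Or.inr rfl), hodd1, hodd3, hhead1, hhead3]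
  unfold T aOf
  rw [pow_add (gi) (d4 3 (ε 0)), pow_add (-gi) (d4 3 (ε 0))]
  simp only [mul_pow]
  ring

end Words

section MkSet
variable {n : ℕ}

def mkSet (τ : Fin (n+1) → Bool × Bool) : Finset (Fin (n+1) × Fin 2) :=
  univ.filter fun p => (if p.2 = 0 then (τ p.1).1 else (τ p.1).2) = true

lemma mem_mkSet (τ : Fin (n+1) → Bool × Bool) (p) :
    p ∈ mkSet τ ↔ (if p.2 = 0 then (τ p.1).1 else (τ p.1).2) = true := by
  unfold mkSet; simp

lemma mkSet_pats (s : Finset (Fin (n+1) × Fin 2)) : mkSet (pats s) = s := by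
  ext ⟨j, c⟩
  rw [mem_mkSet]
  fin_cases c <;> simp [pats]

lemma pats_mkSet (τ : Fin (n+1) → Bool × Bool) : pats (mkSet τ) = τ := by
  funext j
  unfold pats
  rw [Prod.ext_iff]
  constructor <;> simp [mem_mkSet]

lemma card_mkSet (τ : Fin (n+1) → Bool × Bool) :
    (mkSet τ).card = ∑ j, (cond (τ j).1 1 0 + cond (τ j).2 1 0) := by
  unfold mkSet
  rw [Finset.card_filter, Fintype.sum_prod_type]
  refine Finset.sum_congr rfl fun j _ => ?_
  rw [Fin.sum_univ_two]
  rcases h : τ j with ⟨b1, b2⟩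
  cases b1 <;> cases b2 <;> simp [h]

lemma pats_insert_ne (s : Finset (Fin (n+1) × Fin 2)) (q : Fin (n+1) × Fin 2)
    {j : Fin (n+1)} (h : j ≠ q.1) : pats (insert q s) j = pats s j := by
  unfold pats
  rw [Prod.ext_iff]
  constructor <;>
  · simp only [decide_eq_decide, Finset.mem_insert]
    exact or_iff_right fun hq => h (congrArg Prod.fst hq)

lemma pats_erase_ne (s : Finset (Fin (n+1) × Fin 2)) (q : Fin (n+1) × Fin 2)
    {j : Fin (n+1)} (h : j ≠ q.1) : pats (s.erase q) j = pats s j := by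
  unfold pats
  rw [Prod.ext_iff]
  constructor <;>
  · simp only [decide_eq_decide, Finset.mem_erase]
    exact and_iff_right fun hq => h (congrArg Prod.fst hq)

lemma pats_insert_self (s : Finset (Fin (n+1) × Fin 2)) (j : Fin (n+1)) (c : Fin 2) :
    pats (insert (j, c) s) j
      = (if c = 0 then true else (pats s j).1, if c = 1 then true else (pats s j).2) := by
  fin_cases c <;>
  · unfold pats
    rw [Prod.ext_iff]
    constructor <;> simp [Finset.mem_insert, Prod.ext_iff]

lemma pats_erase_self (s : Finset (Fin (n+1) × Fin 2)) (j : Fin (n+1)) (c : Fin 2) :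
    pats (s.erase (j, c)) j
      = (if c = 0 then false else (pats s j).1, if c = 1 then false else (pats s j).2) := by
  fin_cases c <;>
  · unfold pats
    rw [Prod.ext_iff]
    constructor <;> simp [Finset.mem_erase, Prod.ext_iff]

lemma pats_ne_ff_of_mem {s : Finset (Fin (n+1) × Fin 2)} {p} (h : p ∈ s) :
    pats s p.1 ≠ (false, false) := by
  rcases p with ⟨j, c⟩
  fin_cases c <;>
  · intro hff
    rw [Prod.ext_iff] at hff
    simp only [pats] at hff
    simp_all

end MkSet

lemma gray_pm : ∀ (x : ZMod 4) (c : Fin 2), gray x c = 1 ∨ gray x c = -1 := by decide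

section Half
variable {I J : Type*} [Fintype I] [DecidableEq J] (D : I → J → ℤ) (b : J)
  [DecidablePred fun u => D u b = 1]

lemma two_Jchar_half (hpm : ∀ u, D u b = 1 ∨ D u b = -1) (s' : Finset {c : J // c ≠ b}) :
    2 * Jchar (halfFraction D b) s'
      = Jchar D (s'.map (Function.Embedding.subtype _))
        + Jchar D (insert b (s'.map (Function.Embedding.subtype _))) := by
  classical
  set L := s'.map (Function.Embedding.subtype _) with hL
  have hbL : b ∉ L := by
    simp only [hL, Finset.mem_map, Function.Embedding.coe_subtype]
    rintro ⟨⟨q, hq⟩, -, h⟩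
    exact hq h
  have hprod : ∀ u : I, (∏ p ∈ L, D u p) = ∏ q ∈ s', D u q.1 := by
    intro u; rw [hL, Finset.prod_map]; rfl
  unfold Jchar
  have h2 : ∀ u : I, (∏ c ∈ L, D u c) + (∏ c ∈ insert b L, D u c)
      = (1 + D u b) * ∏ c ∈ L, D u c := by
    intro u; rw [Finset.prod_insert hbL]; ring
  rw [← Finset.sum_add_distrib]
  rw [Finset.sum_congr rfl fun u _ => h2 u]
  rw [← Finset.sum_filter_add_sum_filter_not univ (fun u => D u b = 1)]
  have hz : ∑ u ∈ univ.filter (fun u => ¬(D u b = 1)), (1 + D u b) * ∏ c ∈ L, D u c = 0 := by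
    refine Finset.sum_eq_zero fun u hu => ?_
    have := (hpm u).resolve_left (Finset.mem_filter.1 hu).2
    rw [this]; ring
  rw [hz, add_zero]
  have hone : ∑ u ∈ univ.filter (fun u => D u b = 1), (1 + D u b) * ∏ c ∈ L, D u c
      = ∑ u ∈ univ.filter (fun u => D u b = 1), 2 * ∏ c ∈ L, D u c := by
    refine Finset.sum_congr rfl fun u hu => ?_
    rw [(Finset.mem_filter.1 hu).2]; ring
  rw [hone, ← Finset.mul_sum]
  congr 1
  symm
  calc ∑ u ∈ univ.filter (fun u => D u b = 1), ∏ c ∈ L, D u c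
      = ∑ u : {u : I // D u b = 1}, ∏ c ∈ L, D u.1 c :=
        Finset.sum_subtype _ (fun x => by simp) _
    _ = ∑ u : {u : I // D u b = 1}, ∏ q ∈ s', halfFraction D b u q :=
        Finset.sum_congr rfl fun u _ => by rw [hprod]; rfl

lemma two_card_half (hpm : ∀ u, D u b = 1 ∨ D u b = -1) :
    2 * (Fintype.card {u : I // D u b = 1} : ℤ) = (Fintype.card I : ℤ) + Jchar D {b} := by
  classical
  have hJ : Jchar D {b} = ∑ u : I, D u b := by
    unfold Jchar; simp
  have hcard : (Fintype.card {u : I // D u b = 1}) = (univ.filter (fun u => D u b = 1)).card :=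
    Fintype.card_subtype _
  rw [hJ, hcard]
  have : (Fintype.card I : ℤ) + ∑ u : I, D u b = ∑ u : I, (1 + D u b) := by
    rw [Finset.sum_add_distrib, Finset.sum_const, card_univ]; simp
  rw [this, ← Finset.sum_filter_add_sum_filter_not univ (fun u => D u b = 1)]
  have hz : ∑ u ∈ univ.filter (fun u => ¬(D u b = 1)), (1 + D u b) = 0 := by
    refine Finset.sum_eq_zero fun u hu => ?_
    rw [(hpm u).resolve_left (Finset.mem_filter.1 hu).2]; ring
  have hone : ∑ u ∈ univ.filter (fun u => D u b = 1), (1 + D u b)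
      = ∑ _u ∈ univ.filter (fun u => D u b = 1), (2:ℤ) := by
    refine Finset.sum_congr rfl fun u hu => ?_
    rw [(Finset.mem_filter.1 hu).2]; norm_num
  rw [hz, add_zero, hone, Finset.sum_const]
  push_cast; ring

end Half

section Main
variable {n : ℕ} (v : Fin n → ZMod 4)

lemma odd_ne_two {a : ZMod 4} (h : a = 1 ∨ a = 3) : a ≠ 2 := by
  rcases h with h | h <;> rw [h] <;> decide

lemma fin2cases (c : Fin 2) : c = 0 ∨ c = 1 := by fin_cases c <;> simp

lemma card_Odds : (Odds v).card = freq v 1 + freq v 3 := by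
  unfold Odds freq
  rw [Finset.filter_or, Finset.card_union_of_disjoint]
  exact Finset.disjoint_left.2 fun a ha hb => by
    simp only [Finset.mem_filter] at ha hb
    exact absurd (ha.2.symm.trans hb.2) (by decide)

lemma n_split : E0 v + (Odds v).card = n := by
  unfold E0 Odds
  rw [add_comm, Finset.card_filter_add_card_filter_not]
  exact Finset.card_univ.trans (Fintype.card_fin n)

lemma card_mkSet_tauW : (mkSet (tauW v)).card = 2 * (Odds v).card + 2 := by
  rw [card_mkSet, Fin.sum_univ_succ]
  have h0 : (cond (tauW v 0).1 1 0 + cond (tauW v 0).2 1 0) = 2 := by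
    rw [tauW_zero]; rfl
  have hs : ∀ j : Fin n, (cond (tauW v j.succ).1 1 0 + cond (tauW v j.succ).2 1 0)
      = if v j = 1 ∨ v j = 3 then 2 else 0 := by
    intro j
    rw [tauW_succ]
    unfold reqW
    by_cases h : v j = 1 ∨ v j = 3
    · rw [if_pos h, if_pos h]; rfl
    · rw [if_neg h, if_neg h]; rfl
  rw [h0, Finset.sum_congr rfl fun j _ => hs j]
  rw [Finset.sum_ite, Finset.sum_const, Finset.sum_const]
  simp only [smul_eq_mul, mul_zero, add_zero]
  have : (univ.filter (fun j => v j = 1 ∨ v j = 3)) = Odds v := rfl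
  rw [this]
  ring

lemma card_mkSet_tauP (ε : Fin (n+1) → Fin 2) :
    (mkSet (tauP v ε)).card = 1 + (2 * freq v 2 + (Odds v).card) := by
  rw [card_mkSet, Fin.sum_univ_succ]
  have h0 : (cond (tauP v ε 0).1 1 0 + cond (tauP v ε 0).2 1 0) = 1 := by
    rw [tauP_zero]
    rcases fin2cases (ε 0) with h | h <;> rw [h] <;> rfl
  have hs : ∀ j : Fin n, (cond (tauP v ε j.succ).1 1 0 + cond (tauP v ε j.succ).2 1 0)
      = if v j = 2 then 2 else if v j = 1 ∨ v j = 3 then 1 else 0 := by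
    intro j
    by_cases h2 : v j = 2
    · rw [tauP_succ, if_pos h2, if_pos h2]; rfl
    · by_cases hodd : v j = 1 ∨ v j = 3
      · rw [tauP_succ_odd v ε j hodd, if_neg h2, if_pos hodd]
        rcases fin2cases (ε j.succ) with h | h <;> rw [h] <;> rfl
      · rw [tauP_succ_even v ε j hodd, if_neg h2, if_neg h2, if_neg hodd]; rfl
  rw [h0, Finset.sum_congr rfl fun j _ => hs j]
  congr 1
  rw [← Finset.sum_filter_add_sum_filter_not univ (fun j => v j = 2)]
  have hA : ∑ j ∈ univ.filter (fun j => v j = 2),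
      (if v j = 2 then 2 else if v j = 1 ∨ v j = 3 then 1 else 0) = 2 * freq v 2 := by
    rw [Finset.sum_congr rfl fun j hj => if_pos (Finset.mem_filter.1 hj).2,
      Finset.sum_const]
    unfold freq; simp [mul_comm]
  have hB : ∑ j ∈ univ.filter (fun j => ¬(v j = 2)),
      (if v j = 2 then 2 else if v j = 1 ∨ v j = 3 then 1 else 0) = (Odds v).card := by
    rw [Finset.sum_congr rfl fun j hj => if_neg (Finset.mem_filter.1 hj).2,
      Finset.sum_ite, Finset.sum_const, Finset.sum_const, Finset.filter_filter]
    simp only [smul_eq_mul, mul_one, mul_zero, add_zero]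
    have hff : univ.filter (fun a => ¬(v a = 2) ∧ (v a = 1 ∨ v a = 3)) = Odds v := by
      unfold Odds
      ext a
      simp only [Finset.mem_filter, Finset.mem_univ, true_and]
      exact ⟨fun h => h.2, fun h => ⟨odd_ne_two h, h⟩⟩
    rw [hff]
  rw [hA, hB]

def okP (τ : Fin (n+1) → Bool × Bool) : Prop :=
  (τ 0 = pick 0 ∨ τ 0 = pick 1) ∧ ∀ j : Fin n,
    (if v j = 2 then τ j.succ = (true,true)
     else if v j = 1 ∨ v j = 3 then (τ j.succ = pick 0 ∨ τ j.succ = pick 1)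
     else τ j.succ = (false,false))

lemma Jt_zero0 (τ : Fin (n+1) → Bool × Bool) (j0 : Fin (n+1)) (h : τ j0 ≠ (false,false)) :
    Jt v τ 0 = 0 := by
  induction j0 using Fin.cases with
  | zero => exact Jt_zero_head v τ 0 (S_ff0 _ h)
  | succ j =>
    refine Jt_zero_at v τ 0 j ?_
    rw [show ((-0) * v j : ZMod 4) = 0 from by rw [neg_zero, zero_mul]]
    exact S_ff0 _ h

lemma S_two_zero : ∀ bb, bb ≠ (true,true) → Sfun bb 2 = 0 := by decide

lemma Jt_zero2 (τ : Fin (n+1) → Bool × Bool) (j0 : Fin (n+1)) (h : τ j0 ≠ tauW v j0) :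
    Jt v τ 2 = 0 := by
  induction j0 using Fin.cases with
  | zero => exact Jt_zero_head v τ 2 (S_two_zero _ (by rwa [tauW_zero] at h))
  | succ j =>
    refine Jt_zero_at v τ 2 j ?_
    exact S_t2_zero _ (v j) (by rwa [tauW_succ] at h)

lemma Jt_zero_odd (τ : Fin (n+1) → Bool × Bool) (t : ZMod 4) (ht : t = 1 ∨ t = 3)
    (h : ¬ okP v τ) : Jt v τ t = 0 := by
  unfold okP at h
  by_cases hA : τ 0 = pick 0 ∨ τ 0 = pick 1
  · have hB := (not_and.1 h) hA
    push_neg at hB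
    obtain ⟨j, hj⟩ := hB
    exact Jt_zero_at v τ t j (S_odd_zero _ (v j) t ht hj)
  · refine Jt_zero_head v τ t (S_head_odd_zero _ t ht ?_)
    intro c' he
    apply hA
    fin_cases c'
    · exact Or.inl he
    · exact Or.inr he

end Main

section Eps
variable {n : ℕ} (v : Fin n → ZMod 4)

def RelF : Finset (Fin (n+1)) :=
  univ.filter (fun j => j = 0 ∨ ∃ j0 : Fin n, j = j0.succ ∧ (v j0 = 1 ∨ v j0 = 3))

lemma zero_mem_RelF : (0 : Fin (n+1)) ∈ RelF v := by
  unfold RelF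
  rw [Finset.mem_filter]
  exact ⟨Finset.mem_univ _, Or.inl rfl⟩

lemma succ_mem_RelF {j0 : Fin n} (h : v j0 = 1 ∨ v j0 = 3) : j0.succ ∈ RelF v := by
  unfold RelF
  rw [Finset.mem_filter]
  exact ⟨Finset.mem_univ _, Or.inr ⟨j0, rfl, h⟩⟩

lemma succ_not_mem_RelF {j0 : Fin n} (h : ¬(v j0 = 1 ∨ v j0 = 3)) : j0.succ ∉ RelF v := by
  unfold RelF
  rw [Finset.mem_filter]
  rintro ⟨-, h0 | ⟨j1, hj1, hodd⟩⟩
  · exact Fin.succ_ne_zero j0 h0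
  · exact h (Fin.succ_injective n hj1 ▸ hodd)

lemma card_RelF : (RelF v).card = (Odds v).card + 1 := by
  have h : RelF v = insert 0 ((Odds v).image Fin.succ) := by
    ext j
    unfold RelF Odds
    simp only [Finset.mem_filter, Finset.mem_univ, true_and, Finset.mem_insert,
      Finset.mem_image]
    constructor
    · rintro (h0 | ⟨j0, hj0, hodd⟩)
      · exact Or.inl h0
      · exact Or.inr ⟨j0, hodd, hj0.symm⟩
    · rintro (h0 | ⟨j0, hj0, hj⟩)
      · exact Or.inl h0
      · exact Or.inr ⟨j0, hj.symm, hj0⟩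
  rw [h, Finset.card_insert_of_notMem, Finset.card_image_of_injective _ (Fin.succ_injective n)]
  simp only [Finset.mem_image]
  rintro ⟨j0, -, hj⟩
  exact Fin.succ_ne_zero j0 hj

def epsOf (τ : Fin (n+1) → Bool × Bool) : Fin (n+1) → Fin 2 :=
  fun j => if j ∈ RelF v then (if τ j = pick 0 then 0 else 1) else 0

lemma pick_inj : ∀ c c' : Fin 2, pick c = pick c' → c = c' := by decide

lemma okP_eq_tauP (τ : Fin (n+1) → Bool × Bool) (h : okP v τ) : τ = tauP v (epsOf v τ) := by
  funext j
  induction j using Fin.cases with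
  | zero =>
    rw [tauP_zero]
    unfold epsOf
    rw [if_pos (zero_mem_RelF v)]
    rcases h.1 with h0 | h0 <;> rw [h0] <;> decide
  | succ j0 =>
    have hj := h.2 j0
    by_cases h2 : v j0 = 2
    · rw [if_pos h2] at hj
      rw [tauP_succ, if_pos h2, hj]
    · by_cases hodd : v j0 = 1 ∨ v j0 = 3
      · rw [if_neg h2, if_pos hodd] at hj
        rw [tauP_succ_odd v _ j0 hodd]
        unfold epsOf
        rw [if_pos (succ_mem_RelF v hodd)]
        rcases hj with h0 | h0 <;> rw [h0] <;> decide
      · rw [if_neg h2, if_neg hodd] at hj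
        rw [tauP_succ_even v _ j0 hodd, if_neg h2, hj]

lemma epsOf_tauP (ε : Fin (n+1) → Fin 2) (hs : ∀ j, j ∉ RelF v → ε j = 0) :
    epsOf v (tauP v ε) = ε := by
  funext j
  unfold epsOf
  by_cases hj : j ∈ RelF v
  · rw [if_pos hj]
    have hp : tauP v ε j = pick (ε j) := by
      unfold RelF at hj
      rw [Finset.mem_filter] at hj
      rcases hj.2 with h0 | ⟨j0, rfl, hodd⟩
      · rw [h0, tauP_zero]
      · exact tauP_succ_odd v ε j0 hodd
    rw [hp]
    rcases fin2cases (ε j) with h | h <;> rw [h]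
    · rw [if_pos rfl]
    · rw [if_neg (by decide)]
  · rw [if_neg hj, (hs j hj).symm]

def aux_flip (c : Fin 2) : Fin 2 := if c = 0 then 1 else 0

def Eset0 : Finset (Fin (n+1) → Fin 2) :=
  Fintype.piFinset (fun j => if j ∈ RelF v then (univ : Finset (Fin 2)) else {0})

lemma mem_Eset0 (ε : Fin (n+1) → Fin 2) :
    ε ∈ Eset0 v ↔ ∀ j, j ∉ RelF v → ε j = 0 := by
  unfold Eset0
  rw [Fintype.mem_piFinset]
  constructor
  · intro h j hj
    have := h j
    rwa [if_neg hj, Finset.mem_singleton] at this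
  · intro h j
    by_cases hj : j ∈ RelF v
    · rw [if_pos hj]; exact Finset.mem_univ _
    · rw [if_neg hj, Finset.mem_singleton]; exact h j hj

lemma card_Eset0 : (Eset0 v).card = 2^((Odds v).card + 1) := by
  unfold Eset0
  rw [Fintype.card_piFinset]
  have h : ∀ j : Fin (n+1), ((if j ∈ RelF v then (univ : Finset (Fin 2)) else {0})).card
      = if j ∈ RelF v then 2 else 1 := by
    intro j
    by_cases hj : j ∈ RelF v
    · rw [if_pos hj, if_pos hj]; rfl
    · rw [if_neg hj, if_neg hj]; rfl
  rw [Finset.prod_congr rfl fun j _ => h j, Finset.prod_ite, Finset.prod_const,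
    Finset.prod_const, one_pow, mul_one]
  have : univ.filter (fun j => j ∈ RelF v) = RelF v := by
    ext j; simp
  rw [this, card_RelF]

end Eps

section Count
variable {n : ℕ} (v : Fin n → ZMod 4)

def flip0 (ε : Fin (n+1) → Fin 2) : Fin (n+1) → Fin 2 :=
  Function.update ε 0 (aux_flip (ε 0))

lemma flip0_zero (ε : Fin (n+1) → Fin 2) : flip0 ε 0 = aux_flip (ε 0) :=
  Function.update_self _ _ _

lemma flip0_succ (ε : Fin (n+1) → Fin 2) (j : Fin n) : flip0 ε j.succ = ε j.succ :=
  Function.update_of_ne (Fin.succ_ne_zero j) _ _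

lemma aux_flip_flip : ∀ c, aux_flip (aux_flip c) = c := by decide

lemma d4_flip : ∀ c, d4 3 (aux_flip c) + d4 3 c = 1 := by decide

lemma flip0_invol (ε : Fin (n+1) → Fin 2) : flip0 (flip0 ε) = ε := by
  funext j
  induction j using Fin.cases with
  | zero => rw [flip0_zero, flip0_zero, aux_flip_flip]
  | succ j0 => rw [flip0_succ, flip0_succ]

lemma flip0_mem {ε : Fin (n+1) → Fin 2} (h : ε ∈ Eset0 v) : flip0 ε ∈ Eset0 v := by
  rw [mem_Eset0] at h ⊢
  intro j hj
  have hj0 : j ≠ 0 := fun h0 => hj (h0 ▸ zero_mem_RelF v)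
  rw [show flip0 ε j = ε j from Function.update_of_ne hj0 _ _]
  exact h j hj

lemma aOf_flip0 (ε : Fin (n+1) → Fin 2) :
    aOf v (flip0 ε) + aOf v ε = 1 + 2 * ∑ j ∈ Odds v, d4 (v j) (ε j.succ) := by
  unfold aOf
  rw [Finset.sum_congr rfl fun j _ => by rw [flip0_succ], flip0_zero]
  have := d4_flip (ε 0)
  omega

lemma card_parity (r : ℕ) (hr : r < 2) :
    ((Eset0 v).filter (fun ε => aOf v ε % 2 = r)).card * 2 = (Eset0 v).card := by
  have hflip : ∀ ε, aOf v (flip0 ε) % 2 = (aOf v ε + 1) % 2 := by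
    intro ε
    have := aOf_flip0 v ε
    omega
  have hbij : ((Eset0 v).filter (fun ε => aOf v ε % 2 = r)).card
      = ((Eset0 v).filter (fun ε => ¬(aOf v ε % 2 = r))).card := by
    refine Finset.card_bij' (fun ε _ => flip0 ε) (fun ε _ => flip0 ε) ?_ ?_ ?_ ?_
    · intro ε hε
      rw [Finset.mem_filter] at hε ⊢
      refine ⟨flip0_mem v hε.1, ?_⟩
      rw [hflip ε]
      have h2 : aOf v ε % 2 = r := hε.2
      omega
    · intro ε hε
      rw [Finset.mem_filter] at hε ⊢
      refine ⟨flip0_mem v hε.1, ?_⟩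
      rw [hflip ε]
      have h2 : ¬(aOf v ε % 2 = r) := hε.2
      omega
    · exact fun ε _ => flip0_invol ε
    · exact fun ε _ => flip0_invol ε
  have := Finset.card_filter_add_card_filter_not
    (s := Eset0 v) (p := fun ε => aOf v ε % 2 = r)
  omega

def Eset : Finset (Fin (n+1) → Fin 2) :=
  (Eset0 v).filter (fun ε => (Odds v).card % 2 = 1 →
    aOf v ε % 2 = ((Odds v).card / 2 + 1) % 2)

lemma card_Eset : (Eset v).card = 2 * 4 ^ ((Odds v).card / 2) := by
  unfold Eset
  by_cases hF : (Odds v).card % 2 = 1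
  · have h1 : ((Eset0 v).filter (fun ε => (Odds v).card % 2 = 1 →
        aOf v ε % 2 = ((Odds v).card / 2 + 1) % 2)).card
        = ((Eset0 v).filter (fun ε =>
            aOf v ε % 2 = ((Odds v).card / 2 + 1) % 2)).card := by
      congr 1
      exact Finset.filter_congr fun ε _ => by
        constructor
        · exact fun h => h hF
        · exact fun h _ => h
    rw [h1]
    have h2 := card_parity v (((Odds v).card / 2 + 1) % 2) (Nat.mod_lt _ (by norm_num))
    rw [card_Eset0] at h2
    have h3 : (2:ℕ) ^ ((Odds v).card + 1) = (2 * 4 ^ ((Odds v).card / 2)) * 2 := by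
      rw [show (Odds v).card + 1 = 2 * ((Odds v).card / 2) + 2 from by omega,
        pow_add, pow_mul]
      ring
    rw [h3] at h2
    exact Nat.eq_of_mul_eq_mul_right (by norm_num) h2
  · have h1 : ((Eset0 v).filter (fun ε => (Odds v).card % 2 = 1 →
        aOf v ε % 2 = ((Odds v).card / 2 + 1) % 2)) = Eset0 v := by
      refine Finset.filter_true_of_mem fun ε _ => ?_
      intro h
      exact absurd h hF
    rw [h1, card_Eset0]
    rw [show (Odds v).card + 1 = 2 * ((Odds v).card / 2) + 1 from by omega,
      pow_add, pow_mul]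
    norm_num
    ring

end Count

section Final
variable {n : ℕ} (v : Fin n → ZMod 4) (i : Fin n) (c : Fin 2)

abbrev bc : Fin (n+1) × Fin 2 := (Fin.succ i, c)

def W0 : Finset {col : Fin (n+1) × Fin 2 // col ≠ bc i c} :=
  (mkSet (tauW v)).subtype _

def wordP (ε : Fin (n+1) → Fin 2) : Finset {col : Fin (n+1) × Fin 2 // col ≠ bc i c} :=
  (mkSet (tauP v ε)).subtype _

lemma pats_empty (j : Fin (n+1)) : pats (∅ : Finset (Fin (n+1) × Fin 2)) j = (false, false) := by
  unfold pats; simp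

lemma pick_ne_ff : ∀ c' : Fin 2, pick c' ≠ (false, false) := by decide
lemma pick_ne_tt : ∀ c' : Fin 2, pick c' ≠ (true, true) := by decide
lemma tt_ne_pick : ∀ c' : Fin 2, (true, true) ≠ pick c' := by decide
lemma reqW_two : reqW 2 = (false, false) := by decide
lemma insert_bits_ne_ff : ∀ (c' : Fin 2) (bb : Bool × Bool),
    (if c' = 0 then true else bb.1, if c' = 1 then true else bb.2) ≠ (false, false) := by decide
lemma erase_bits_ne_tt : ∀ (c' : Fin 2) (bb : Bool × Bool),
    (if c' = 0 then false else bb.1, if c' = 1 then false else bb.2) ≠ (true, true) := by decide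
lemma bits_false_ne_tt : ∀ (c' : Fin 2) (bb : Bool × Bool),
    (if c' = 0 then bb.1 else bb.2) = false → bb ≠ (true, true) := by decide
lemma insert_bits_pick : ∀ c' : Fin 2,
    (if c' = 0 then true else (false : Bool), if c' = 1 then true else (false : Bool)) = pick c' := by
  decide

lemma sumJt_eq_zero (τ : Fin (n+1) → Bool × Bool) (hA : ∃ j0, τ j0 ≠ (false, false))
    (hB : ∃ j0, τ j0 ≠ tauW v j0) (hC : ¬ okP v τ) : ∑ t : ZMod 4, Jt v τ t = 0 := by
  obtain ⟨j0, h0⟩ := hA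
  obtain ⟨j1, h1⟩ := hB
  rw [zmod4_sum (Jt v τ), Jt_zero0 v τ j0 h0, Jt_zero2 v τ j1 h1,
    Jt_zero_odd v τ 1 (Or.inl rfl) hC, Jt_zero_odd v τ 3 (Or.inr rfl) hC]
  norm_num

lemma not_okP_of_bit_ne_tt (hass : v i = 2) (τ : Fin (n+1) → Bool × Bool)
    (h : τ i.succ ≠ (true, true)) : ¬ okP v τ := by
  rintro ⟨-, hB⟩
  have := hB i
  rw [hass, if_pos rfl] at this
  exact h this

lemma bnot_mem_tauW (hass : v i = 2) : bc i c ∉ mkSet (tauW v) := by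
  rw [mem_mkSet]
  show ¬((if c = 0 then (tauW v i.succ).1 else (tauW v i.succ).2) = true)
  rw [tauW_succ, hass, reqW_two]
  fin_cases c <;> simp

lemma b_mem_tauP (hass : v i = 2) (ε : Fin (n+1) → Fin 2) : bc i c ∈ mkSet (tauP v ε) := by
  rw [mem_mkSet]
  show (if c = 0 then (tauP v ε i.succ).1 else (tauP v ε i.succ).2) = true
  rw [tauP_succ, if_pos hass]
  fin_cases c <;> simp

lemma lift_W0 (hass : v i = 2) :
    (W0 v i c).map (Function.Embedding.subtype _) = mkSet (tauW v) := by
  unfold W0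
  rw [Finset.subtype_map, Finset.filter_ne', Finset.erase_eq_of_notMem (bnot_mem_tauW v i c hass)]

lemma lift_wordP (ε : Fin (n+1) → Fin 2) :
    (wordP v i c ε).map (Function.Embedding.subtype _) = (mkSet (tauP v ε)).erase (bc i c) := by
  unfold wordP
  rw [Finset.subtype_map, Finset.filter_ne']

lemma Dv_pm : ∀ u, Dv v u (bc i c) = 1 ∨ Dv v u (bc i c) = -1 := fun u => gray_pm _ _

lemma intR_inj {a b : ℤ} (h : (a : R) = (b : R)) : a = b := by
  have := congrArg Zsqrtd.re h
  simpa using this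

lemma pats_single : pats ({bc i c} : Finset (Fin (n+1) × Fin 2)) i.succ = pick c := by
  rw [show ({bc i c} : Finset (Fin (n+1) × Fin 2)) = insert (i.succ, c) ∅ from rfl,
    pats_insert_self, pats_empty]
  exact insert_bits_pick c

lemma Jchar_b_zero (hass : v i = 2) : Jchar (Dv v) {bc i c} = 0 := by
  have h4 := fourJ v {bc i c}
  have hz : ∑ t : ZMod 4, Jt v (pats {bc i c}) t = 0 := by
    refine sumJt_eq_zero v _ ⟨i.succ, ?_⟩ ⟨i.succ, ?_⟩ ?_
    · rw [pats_single]; exact pick_ne_ff c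
    · rw [pats_single, tauW_succ, hass, reqW_two]; exact pick_ne_ff c
    · refine not_okP_of_bit_ne_tt v i hass _ ?_
      rw [pats_single]; exact pick_ne_tt c
  rw [hz] at h4
  have h5 : ((4 * Jchar (Dv v) {bc i c} : ℤ) : R) = ((0 : ℤ) : R) := by push_cast; exact h4
  have := intR_inj h5
  omega

lemma twoN (hass : v i = 2) :
    2 * (Fintype.card {u : Fin n → ZMod 4 // Dv v u (bc i c) = 1} : ℤ) = 4^n := by
  rw [two_card_half (Dv v) (bc i c) (Dv_pm v i c), Jchar_b_zero v i c hass, add_zero]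
  have : Fintype.card (Fin n → ZMod 4) = 4^n := by
    rw [Fintype.card_fun]
    simp [ZMod.card]
  rw [this]
  push_cast
  ring

lemma Npos (hass : v i = 2) :
    0 < (Fintype.card {u : Fin n → ZMod 4 // Dv v u (bc i c) = 1} : ℤ) := by
  have h := twoN v i c hass
  have : (0:ℤ) < 4^n := pow_pos (by norm_num) n
  linarith

lemma eightJ (s' : Finset {col : Fin (n+1) × Fin 2 // col ≠ bc i c}) :
    (8:R) * ((Jchar (halfFraction (Dv v) (bc i c)) s' : ℤ) : R)
      = (∑ t : ZMod 4, Jt v (pats (s'.map (Function.Embedding.subtype _))) t)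
        + ∑ t : ZMod 4, Jt v (pats (insert (bc i c) (s'.map (Function.Embedding.subtype _)))) t := by
  have h2 := two_Jchar_half (Dv v) (bc i c) (Dv_pm v i c) s'
  calc (8:R) * ((Jchar (halfFraction (Dv v) (bc i c)) s' : ℤ) : R)
      = (4:R) * (((2 * Jchar (halfFraction (Dv v) (bc i c)) s' : ℤ)) : R) := by
        push_cast; ring
    _ = (4:R) * (((Jchar (Dv v) (s'.map (Function.Embedding.subtype _))
          + Jchar (Dv v) (insert (bc i c) (s'.map (Function.Embedding.subtype _))) : ℤ)) : R) := by
        rw [h2]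
    _ = (4:R) * ((Jchar (Dv v) (s'.map (Function.Embedding.subtype _)) : ℤ) : R)
        + (4:R) * ((Jchar (Dv v) (insert (bc i c) (s'.map (Function.Embedding.subtype _))) : ℤ) : R) := by
        push_cast; ring
    _ = _ := by rw [fourJ, fourJ]

lemma JW0 (hass : v i = 2) :
    (Jchar (halfFraction (Dv v) (bc i c)) (W0 v i c) : ℤ)
      = (Fintype.card {u : Fin n → ZMod 4 // Dv v u (bc i c) = 1} : ℤ) := by
  have h8 := eightJ v i c (W0 v i c)
  rw [lift_W0 v i c hass] at h8
  have hnok : ¬ okP v (tauW v) := fun hok => by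
    rcases hok.1 with h | h <;> rw [tauW_zero] at h
    · exact tt_ne_pick 0 h
    · exact tt_ne_pick 1 h
  have hW : ∑ t : ZMod 4, Jt v (pats (mkSet (tauW v))) t = 4^(n+1) := by
    rw [pats_mkSet, zmod4_sum (Jt v (tauW v)),
      Jt_zero0 v _ 0 (by rw [tauW_zero]; decide),
      Jt_tauW_two, Jt_zero_odd v _ 1 (Or.inl rfl) hnok, Jt_zero_odd v _ 3 (Or.inr rfl) hnok]
    norm_num
  have hps : pats (insert (bc i c) (mkSet (tauW v))) i.succ = pick c := by
    rw [show (bc i c) = ((i.succ, c) : Fin (n+1) × Fin 2) from rfl,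
      pats_insert_self, pats_mkSet, tauW_succ, hass, reqW_two]
    exact insert_bits_pick c
  have hI : ∑ t : ZMod 4, Jt v (pats (insert (bc i c) (mkSet (tauW v)))) t = 0 := by
    refine sumJt_eq_zero v _ ⟨i.succ, by rw [hps]; exact pick_ne_ff c⟩
      ⟨i.succ, by rw [hps, tauW_succ, hass, reqW_two]; exact pick_ne_ff c⟩
      (not_okP_of_bit_ne_tt v i hass _ (by rw [hps]; exact pick_ne_tt c))
  rw [hW, hI, add_zero] at h8
  have h8' : (8 : ℤ) * Jchar (halfFraction (Dv v) (bc i c)) (W0 v i c) = 4^(n+1) :=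
    intR_inj (by push_cast; linear_combination h8)
  have hN := twoN v i c hass
  have hpow : (4:ℤ)^(n+1) = 4 * 4^n := by ring
  linarith

lemma card_W0 (hass : v i = 2) : (W0 v i c).card = 2*(Odds v).card + 2 := by
  have := Finset.card_map (Function.Embedding.subtype
    (fun col : Fin (n+1) × Fin 2 => col ≠ bc i c)) (s := W0 v i c)
  rw [lift_W0 v i c hass, card_mkSet_tauW] at this
  omega

lemma rho_W0 (hass : v i = 2) :
    rho (halfFraction (Dv v) (bc i c)) (W0 v i c) = 1 := by
  unfold rho
  rw [JW0 v i c hass]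
  have hN := Npos v i c hass
  rw [abs_of_pos (by exact_mod_cast hN)]
  refine div_self ?_
  exact_mod_cast hN.ne'

lemma JwordP (hass : v i = 2) (ε : Fin (n+1) → Fin 2) :
    (8:R) * ((Jchar (halfFraction (Dv v) (bc i c)) (wordP v i c ε) : ℤ) : R)
      = 4^(E0 v) * 2^((Odds v).card + 1) * T ((Odds v).card + 1) (aOf v ε) := by
  have h8 := eightJ v i c (wordP v i c ε)
  rw [lift_wordP v i c ε] at h8
  have hp0 : pats ((mkSet (tauP v ε)).erase (bc i c)) 0 = pick (ε 0) := by
    rw [pats_erase_ne _ _ (Ne.symm (Fin.succ_ne_zero i)), pats_mkSet, tauP_zero]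
  have hpi : pats ((mkSet (tauP v ε)).erase (bc i c)) i.succ ≠ (true, true) := by
    rw [show (bc i c) = ((i.succ, c) : Fin (n+1) × Fin 2) from rfl, pats_erase_self]
    exact erase_bits_ne_tt c _
  have hz1 : ∑ t : ZMod 4, Jt v (pats ((mkSet (tauP v ε)).erase (bc i c))) t = 0 := by
    refine sumJt_eq_zero v _ ⟨0, by rw [hp0]; exact pick_ne_ff _⟩
      ⟨0, by rw [hp0, tauW_zero]; exact pick_ne_tt _⟩
      (not_okP_of_bit_ne_tt v i hass _ hpi)
  rw [Finset.insert_erase (b_mem_tauP v i c hass ε), pats_mkSet] at h8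
  rw [hz1, zero_add] at h8
  rw [zmod4_sum (Jt v (tauP v ε)),
    Jt_zero0 v _ 0 (by rw [tauP_zero]; exact pick_ne_ff _),
    Jt_zero2 v _ 0 (by rw [tauP_zero, tauW_zero]; exact pick_ne_tt _)] at h8
  have hval := Jt_tauP_value v ε
  rw [h8]
  rw [← hval]
  ring

lemma rho_wordP (hass : v i = 2) (ε : Fin (n+1) → Fin 2) (hε : ε ∈ Eset v) :
    rho (halfFraction (Dv v) (bc i c)) (wordP v i c ε)
      = 1 / 2^((Odds v).card / 2) := by
  set F := (Odds v).card with hF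
  set J' := Jchar (halfFraction (Dv v) (bc i c)) (wordP v i c ε) with hJ'
  set N := ((Fintype.card {u : Fin n → ZMod 4 // Dv v u (bc i c) = 1}) : ℤ) with hN
  have hT : ∃ e : ℤ, (e = 1 ∨ e = -1) ∧
      T (F + 1) (aOf v ε) = (e : R) * 2^(F/2 + 1 + F % 2) := by
    rcases Nat.even_or_odd F with hFe | hFo
    · have hFm : F % 2 = 0 := Nat.even_iff.1 hFe
      obtain ⟨e, he, hTv⟩ := T_odd (F/2) (aOf v ε)
      refine ⟨e, he, ?_⟩
      rw [show F + 1 = 2*(F/2) + 1 from by omega, hTv,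
        show F/2 + 1 + F % 2 = F/2 + 1 from by omega]
    · have hFm : F % 2 = 1 := Nat.odd_iff.1 hFo
      have hpar : aOf v ε % 2 = (F / 2 + 1) % 2 := by
        have hfil := (Finset.mem_filter.1 hε).2
        exact hfil (by omega)
      obtain ⟨e, he, hTv⟩ := (T_even (F/2) (aOf v ε)).2 (by omega)
      refine ⟨e, he, ?_⟩
      rw [show F + 1 = 2*(F/2) + 2 from by omega, hTv,
        show F/2 + 1 + F % 2 = F/2 + 2 from by omega]
  obtain ⟨e, he, hTv⟩ := hT
  have h8 := JwordP v i c hass ε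
  rw [hTv] at h8
  have hZ : (8:ℤ) * J' = e * (4^(E0 v) * 2^(F + 1) * 2^(F/2 + 1 + F % 2)) :=
    intR_inj (by push_cast; linear_combination h8)
  have hNn : 2 * N = 4^n := twoN v i c hass
  have hkey : 2^(F/2) * J' = e * N := by
    have hexp : (4:ℤ)^(E0 v) * 2^(F + 1) * 2^(F/2 + 1 + F % 2) * 2^(F/2) = 4^(n+1) := by
      rw [show (4:ℤ) = 2^2 from by norm_num, ← pow_mul, ← pow_mul, ← pow_add, ← pow_add,
        ← pow_add]
      congr 1
      have hsplit := n_split v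
      omega
    have h1 : (8:ℤ) * (2^(F/2) * J') = e * 4^(n+1) := by
      rw [show (8:ℤ) * (2^(F/2) * J') = ((8:ℤ) * J') * 2^(F/2) from by ring, hZ, ← hexp]
      ring
    have h2 : (8:ℤ) * (e * N) = e * 4^(n+1) := by
      rw [show (4:ℤ)^(n+1) = 4 * 4^n from by ring, ← hNn]
      ring
    exact mul_left_cancel₀ (by norm_num : (8:ℤ) ≠ 0) (h1.trans h2.symm)
  have hNpos : 0 < N := Npos v i c hass
  have habs : |J'| * 2^(F/2) = N := by
    have h1 : |2^(F/2) * J'| = |e * N| := by rw [hkey]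
    rw [abs_mul, abs_mul] at h1
    have h2 : |(2:ℤ)^(F/2)| = 2^(F/2) := abs_of_pos (pow_pos (by norm_num) _)
    have h3 : |e| = 1 := by rcases he with h | h <;> rw [h] <;> norm_num
    rw [h2, h3, one_mul, abs_of_pos hNpos] at h1
    linarith
  unfold rho
  rw [← hJ']
  have hNat : 0 < Fintype.card {u : Fin n → ZMod 4 // Dv v u (bc i c) = 1} := by
    rw [hN] at hNpos; exact_mod_cast hNpos
  have hcardQ : ((Fintype.card {u : Fin n → ZMod 4 // Dv v u (bc i c) = 1}) : ℚ) ≠ 0 := by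
    exact_mod_cast hNat.ne'
  rw [div_eq_div_iff hcardQ (by positivity : ((2:ℚ)^(F/2)) ≠ 0)]
  have hq : ((|J'| * 2^(F/2) : ℤ) : ℚ)
      = ((Fintype.card {u : Fin n → ZMod 4 // Dv v u (bc i c) = 1}) : ℚ) := by
    rw [habs, hN]
    push_cast
    ring
  push_cast at hq
  linarith [hq]

lemma card_wordP (hass : v i = 2) (ε : Fin (n+1) → Fin 2) :
    (wordP v i c ε).card = 2 * freq v 2 + (Odds v).card := by
  have h := Finset.card_map (Function.Embedding.subtype
    (fun col : Fin (n+1) × Fin 2 => col ≠ bc i c)) (s := wordP v i c ε)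
  rw [lift_wordP, Finset.card_erase_of_mem (b_mem_tauP v i c hass ε), card_mkSet_tauP] at h
  omega

lemma wordP_inj (hass : v i = 2) : ∀ ε₁ ∈ Eset v, ∀ ε₂ ∈ Eset v,
    wordP v i c ε₁ = wordP v i c ε₂ → ε₁ = ε₂ := by
  intro ε₁ h1 ε₂ h2 heq
  have hm : (mkSet (tauP v ε₁)).erase (bc i c) = (mkSet (tauP v ε₂)).erase (bc i c) := by
    rw [← lift_wordP v i c ε₁, ← lift_wordP v i c ε₂, heq]
  have hmk : mkSet (tauP v ε₁) = mkSet (tauP v ε₂) := by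
    rw [← Finset.insert_erase (b_mem_tauP v i c hass ε₁),
      ← Finset.insert_erase (b_mem_tauP v i c hass ε₂), hm]
  have htau : tauP v ε₁ = tauP v ε₂ := by
    rw [← pats_mkSet (tauP v ε₁), hmk, pats_mkSet]
  have hs1 : ∀ j, j ∉ RelF v → ε₁ j = 0 := (mem_Eset0 v ε₁).1 (Finset.mem_filter.1 h1).1
  have hs2 : ∀ j, j ∉ RelF v → ε₂ j = 0 := (mem_Eset0 v ε₂).1 (Finset.mem_filter.1 h2).1
  rw [← epsOf_tauP v ε₁ hs1, ← epsOf_tauP v ε₂ hs2, htau]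

lemma W0_ne_wordP (hass : v i = 2) (ε : Fin (n+1) → Fin 2) :
    W0 v i c ≠ wordP v i c ε := by
  intro h
  have hm := congrArg (Finset.map (Function.Embedding.subtype
    (fun col : Fin (n+1) × Fin 2 => col ≠ bc i c))) h
  rw [lift_W0 v i c hass, lift_wordP] at hm
  have hthis := congrArg (fun s => pats s (0 : Fin (n+1))) hm
  have hL : pats (mkSet (tauW v)) (0 : Fin (n+1)) = (true, true) := by
    rw [pats_mkSet, tauW_zero]
  have hR : pats ((mkSet (tauP v ε)).erase (bc i c)) (0 : Fin (n+1)) = pick (ε 0) := by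
    rw [pats_erase_ne _ _ (Ne.symm (Fin.succ_ne_zero i)), pats_mkSet, tauP_zero]
  rw [hL, hR] at hthis
  exact tt_ne_pick _ hthis

lemma bit_sel (s : Finset (Fin (n+1) × Fin 2)) (j : Fin (n+1)) (c' : Fin 2) :
    (if c' = 0 then (pats s j).1 else (pats s j).2) = decide ((j, c') ∈ s) := by
  fin_cases c' <;> simp [pats]

lemma rho_other (hass : v i = 2) (s' : Finset {col : Fin (n+1) × Fin 2 // col ≠ bc i c})
    (hne : s'.Nonempty) (h0 : s' ≠ W0 v i c) (h1 : ∀ ε ∈ Eset v, s' ≠ wordP v i c ε) :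
    Jchar (halfFraction (Dv v) (bc i c)) s' = 0 := by
  have h8 := eightJ v i c s'
  set L := s'.map (Function.Embedding.subtype _) with hLdef
  have hbL : bc i c ∉ L := by
    rw [hLdef]
    simp only [Finset.mem_map, Function.Embedding.coe_subtype]
    rintro ⟨⟨q, hq⟩, -, hqe⟩
    exact hq hqe
  have hbit : (if c = 0 then (pats L i.succ).1 else (pats L i.succ).2) = false := by
    rw [bit_sel]
    exact decide_eq_false hbL
  have hz1 : ∑ t : ZMod 4, Jt v (pats L) t = 0 := by
    refine sumJt_eq_zero v _ ?_ ?_ ?_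
    · obtain ⟨q, hq⟩ := hne
      exact ⟨q.1.1, pats_ne_ff_of_mem (Finset.mem_map_of_mem _ hq)⟩
    · by_contra hall
      push_neg at hall
      have hpw : pats L = tauW v := funext hall
      have hLW : L = mkSet (tauW v) := by rw [← mkSet_pats L, hpw]
      apply h0
      apply Finset.map_injective (Function.Embedding.subtype
        (fun col : Fin (n+1) × Fin 2 => col ≠ bc i c))
      rw [← hLdef, hLW, lift_W0 v i c hass]
    · exact not_okP_of_bit_ne_tt v i hass _ (bits_false_ne_tt c _ hbit)
  have hins_i : pats (insert (bc i c) L) i.succ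
      = (if c = 0 then true else (pats L i.succ).1, if c = 1 then true else (pats L i.succ).2) :=
    pats_insert_self L i.succ c
  have hz2 : ∑ t : ZMod 4, Jt v (pats (insert (bc i c) L)) t = 0 := by
    rw [zmod4_sum (Jt v (pats (insert (bc i c) L))),
      Jt_zero0 v _ i.succ (by rw [hins_i]; exact insert_bits_ne_ff c _),
      Jt_zero2 v _ i.succ (by rw [hins_i, tauW_succ, hass, reqW_two]; exact insert_bits_ne_ff c _)]
    by_cases hok : okP v (pats (insert (bc i c) L))
    · set τ' := pats (insert (bc i c) L) with hτ'
      have htau : τ' = tauP v (epsOf v τ') := okP_eq_tauP v τ' hok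
      have hsupp : ∀ j, j ∉ RelF v → epsOf v τ' j = 0 := fun j hj => by
        unfold epsOf; rw [if_neg hj]
      have hmk : insert (bc i c) L = mkSet (tauP v (epsOf v τ')) := by
        rw [← congrArg mkSet htau, hτ', mkSet_pats]
      have hworde : s' = wordP v i c (epsOf v τ') := by
        apply Finset.map_injective (Function.Embedding.subtype
          (fun col : Fin (n+1) × Fin 2 => col ≠ bc i c))
        rw [lift_wordP, ← hLdef, ← hmk, Finset.erase_insert hbL]
      have hparfail : ¬((Odds v).card % 2 = 1 →
          aOf v (epsOf v τ') % 2 = ((Odds v).card / 2 + 1) % 2) := by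
        intro hpar
        exact h1 (epsOf v τ')
          (Finset.mem_filter.2 ⟨(mem_Eset0 v _).2 hsupp, hpar⟩) hworde
      push_neg at hparfail
      obtain ⟨hFodd, hbad⟩ := hparfail
      have hT : T ((Odds v).card + 1) (aOf v (epsOf v τ')) = 0 := by
        have hth := (T_even ((Odds v).card / 2) (aOf v (epsOf v τ'))).1 (by omega)
        rwa [show 2 * ((Odds v).card / 2) + 2 = (Odds v).card + 1 from by omega] at hth
      have hval := Jt_tauP_value v (epsOf v τ')
      rw [← htau, hT, mul_zero] at hval
      linear_combination hval
    · rw [Jt_zero_odd v _ 1 (Or.inl rfl) hok, Jt_zero_odd v _ 3 (Or.inr rfl) hok]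
      norm_num
  rw [hz1, hz2, add_zero] at h8
  have h8' : (8:ℤ) * Jchar (halfFraction (Dv v) (bc i c)) s' = 0 :=
    intR_inj (by push_cast; linear_combination h8)
  omega

end Final

end St10

/-- Theorem 3(b): if the branching column is associated with an entry 2 of
`v`, the half-fraction `D′` has exactly one complete word of length `k₂` and exactly
`2/ρ² = 2·4^⌊(f₁+f₃)/2⌋` partial words of length `k₁ − 1` with aliasing index `ρ`. -/


theorem statement10 (n : ℕ) (v : Fin n → ZMod 4)
    (f1 f2 f3 : ℕ) (h1 : f1 = freq v 1) (h2 : f2 = freq v 2) (h3 : f3 = freq v 3)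
    (k1 k2 : ℕ) (hk1 : k1 = f1 + 2 * f2 + f3 + 1) (hk2 : k2 = 2 * f1 + 2 * f3 + 2)
    (p : ℚ) (hp : p = 1 / 2 ^ ((f1 + f3) / 2))
    (i : Fin n) (c : Fin 2) (hassoc : v i = 2) :
    ∃ S0 S1 : Finset (Finset {col : Fin (n + 1) × Fin 2 // col ≠ (i.succ, c)}),
      S0.card = 1 ∧
      S1.card = 2 * 4 ^ ((f1 + f3) / 2) ∧
      Disjoint S0 S1 ∧
      (∀ s ∈ S0, s.card = k2 ∧ rho (halfFraction (Dv v) (i.succ, c)) s = 1) ∧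
      (∀ s ∈ S1, s.card = k1 - 1 ∧ rho (halfFraction (Dv v) (i.succ, c)) s = p) ∧
      (∀ s : Finset {col : Fin (n + 1) × Fin 2 // col ≠ (i.succ, c)},
        s.Nonempty → s ∉ S0 → s ∉ S1 →
        rho (halfFraction (Dv v) (i.succ, c)) s = 0) := by

  classical
  have hF : (St10.Odds v).card = f1 + f3 := by
    rw [St10.card_Odds, h1, h3]
  refine ⟨{St10.W0 v i c}, (St10.Eset v).image (St10.wordP v i c), ?_, ?_, ?_, ?_, ?_, ?_⟩
  · exact Finset.card_singleton _
  · rw [Finset.card_image_of_injOn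
      (fun ε₁ he1 ε₂ he2 heq => St10.wordP_inj v i c hassoc ε₁ he1 ε₂ he2 heq),
      St10.card_Eset, hF]
  · rw [Finset.disjoint_left]
    intro s hs hs'
    rw [Finset.mem_singleton] at hs
    obtain ⟨ε, hε, heq⟩ := Finset.mem_image.1 hs'
    exact St10.W0_ne_wordP v i c hassoc ε (hs.symm.trans heq.symm)
  · intro s hs
    rw [Finset.mem_singleton] at hs
    subst hs
    constructor
    · rw [St10.card_W0 v i c hassoc, hF, hk2]
      ring
    · exact St10.rho_W0 v i c hassoc
  · intro s hs
    obtain ⟨ε, hε, heq⟩ := Finset.mem_image.1 hs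
    subst heq
    constructor
    · rw [St10.card_wordP v i c hassoc, hF, ← h2, hk1]
      omega
    · show rho (halfFraction (Dv v) (St10.bc i c)) (St10.wordP v i c ε) = p
      rw [St10.rho_wordP v i c hassoc ε hε, hF, hp]
  · intro s hne hs0 hs1
    have hJ : Jchar (halfFraction (Dv v) (St10.bc i c)) s = 0 := by
      refine St10.rho_other v i c hassoc s hne ?_ ?_
      · intro h
        exact hs0 (by rw [Finset.mem_singleton, h])
      · intro ε hε h
        exact hs1 (Finset.mem_image.2 ⟨ε, hε, h.symm⟩)
    show rho (halfFraction (Dv v) (St10.bc i c)) s = 0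
    unfold rho
    rw [hJ]
    simp
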